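/- Up to IPC-provable equivalence, every NNIL formula is a finite disjunction of IPC-prime NNIL formulas; i.e. NNIL = (prime NNIL)^∨ modulo IPC-equivalence. -/

import Mathlib

inductive Fm : Type
  | bot : Fm
  | atom : ℕ → Fm
  | and : Fm → Fm → Fm
  | or : Fm → Fm → Fm
  | imp : Fm → Fm → Fm
deriving DecidableEq

namespace Fm

def neg (A : Fm) : Fm := A.imp .bot
def top : Fm := Fm.bot.imp .bot
def iff (A B : Fm) : Fm := (A.imp B).and (B.imp A)

def subst (θ : ℕ → Fm) : Fm → Fm
  | bot => bot
  | atom n => θ n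
  | and A B => (A.subst θ).and (B.subst θ)
  | or A B => (A.subst θ).or (B.subst θ)
  | imp A B => (A.subst θ).imp (B.subst θ)

def atoms : Fm → Finset ℕ
  | bot => ∅
  | atom n => {n}
  | and A B => A.atoms ∪ B.atoms
  | or A B => A.atoms ∪ B.atoms
  | imp A B => A.atoms ∪ B.atoms

/-- maximal nesting of implications in the left/overall: `c→`. -/
def cimp : Fm → ℕ
  | bot => 0
  | atom _ => 0
  | and A B => max A.cimp B.cimp
  | or A B => max A.cimp B.cimp
  | imp A B => 1 + max A.cimp B.cimp

end Fm

def bigAndL (l : List Fm) : Fm := l.foldr Fm.and Fm.top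
def bigOrL (l : List Fm) : Fm := l.foldr Fm.or Fm.bot

/-- nonempty disjunction -/
def bigOrNE : Fm → List Fm → Fm
  | A, [] => A
  | A, B :: l => A.or (bigOrNE B l)

/-- Hilbert-style intuitionistic propositional calculus. -/
inductive IPC : Fm → Prop
  | imp_k (A B : Fm) : IPC (A.imp (B.imp A))
  | imp_s (A B C : Fm) : IPC ((A.imp (B.imp C)).imp ((A.imp B).imp (A.imp C)))
  | and_intro (A B : Fm) : IPC (A.imp (B.imp (A.and B)))
  | and_left (A B : Fm) : IPC ((A.and B).imp A)
  | and_right (A B : Fm) : IPC ((A.and B).imp B)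
  | or_inl (A B : Fm) : IPC (A.imp (A.or B))
  | or_inr (A B : Fm) : IPC (B.imp (A.or B))
  | or_elim (A B C : Fm) : IPC ((A.imp C).imp ((B.imp C).imp ((A.or B).imp C)))
  | exfalso (A : Fm) : IPC (Fm.bot.imp A)
  | mp {A B : Fm} : IPC (A.imp B) → IPC A → IPC B

/-- Γ-preservativity in the logic T : `A ⊳_{T,Γ} B`. -/
def Pres (T : Fm → Prop) (Γ : Set Fm) (A B : Fm) : Prop :=
  ∀ E ∈ Γ, T (E.imp A) → T (E.imp B)

/-- substitutions are identity on the parameters. -/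
def IdOnPar (par : Finset ℕ) (θ : ℕ → Fm) : Prop :=
  ∀ p ∈ par, θ p = Fm.atom p

/-- implication-free formulas. -/
inductive NI : Fm → Prop
  | bot : NI .bot
  | atom (n : ℕ) : NI (.atom n)
  | and {A B : Fm} : NI A → NI B → NI (A.and B)
  | or {A B : Fm} : NI A → NI B → NI (A.or B)

/-- No Nested Implications in the Left. -/
inductive NNIL : Fm → Prop
  | bot : NNIL .bot
  | atom (n : ℕ) : NNIL (.atom n)
  | and {A B : Fm} : NNIL A → NNIL B → NNIL (A.and B)
  | or {A B : Fm} : NNIL A → NNIL B → NNIL (A.or B)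
  | imp {A B : Fm} : NI A → NNIL B → NNIL (A.imp B)

def IPCPrime (A : Fm) : Prop :=
  ∀ B C, IPC (A.imp (B.or C)) → IPC (A.imp B) ∨ IPC (A.imp C)

/-- T-components: `⋀Γ ∧ ⋀Δ`, Γ atoms, Δ implications with atomic
antecedents not T-provable from Γ. -/
def IsComponentOver (T : Fm → Prop) (B : Fm) : Prop :=
  ∃ (as : List ℕ) (imps : List (ℕ × Fm)),
    B = (bigAndL (as.map Fm.atom)).and
          (bigAndL (imps.map fun p => (Fm.atom p.1).imp p.2)) ∧
    ∀ p ∈ imps, ¬ T ((bigAndL (as.map Fm.atom)).imp (Fm.atom p.1))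


/-! ### Auxiliary development -/

section Aux

open Fm

/-- Natural-deduction style derivability from a list of hypotheses. -/
inductive Der : List Fm → Fm → Prop
  | hyp {Γ A} : A ∈ Γ → Der Γ A
  | ax {Γ A} : IPC A → Der Γ A
  | mp {Γ A B} : Der Γ (A.imp B) → Der Γ A → Der Γ B

theorem ipc_id (A : Fm) : IPC (A.imp A) :=
  IPC.mp (IPC.mp (IPC.imp_s A (A.imp A) A) (IPC.imp_k A (A.imp A))) (IPC.imp_k A A)

theorem Der.weaken {Γ Δ : List Fm} {A : Fm} (h : Der Γ A) (hsub : ∀ X ∈ Γ, X ∈ Δ) :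
    Der Δ A := by
  induction h generalizing Δ with
  | hyp h => exact Der.hyp (hsub _ h)
  | ax h => exact Der.ax h
  | mp _ _ ih1 ih2 => exact Der.mp (ih1 hsub) (ih2 hsub)

theorem Der.ded_aux {Δ : List Fm} {B : Fm} (h : Der Δ B) :
    ∀ {A : Fm} {Γ : List Fm}, Δ = A :: Γ → Der Γ (A.imp B) := by
  induction h with
  | hyp hmem =>
    intro A Γ hEq
    subst hEq
    rcases List.mem_cons.1 hmem with h' | h'
    · subst h'; exact Der.ax (ipc_id _)
    · exact Der.mp (Der.ax (IPC.imp_k _ _)) (Der.hyp h')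
  | ax h => intro A Γ hEq; exact Der.mp (Der.ax (IPC.imp_k _ _)) (Der.ax h)
  | mp _ _ ih1 ih2 =>
    intro A Γ hEq
    exact Der.mp (Der.mp (Der.ax (IPC.imp_s _ _ _)) (ih1 hEq)) (ih2 hEq)

theorem Der.ded {Γ : List Fm} {A B : Fm} (h : Der (A :: Γ) B) : Der Γ (A.imp B) :=
  Der.ded_aux h rfl

theorem Der.h0 {Γ : List Fm} {A : Fm} : Der (A :: Γ) A := Der.hyp (by simp)
theorem Der.h1 {Γ : List Fm} {A B : Fm} : Der (B :: A :: Γ) A := Der.hyp (by simp)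
theorem Der.h2 {Γ : List Fm} {A B C : Fm} : Der (C :: B :: A :: Γ) A := Der.hyp (by simp)

theorem Der.unded {Γ : List Fm} {A B : Fm} (h : Der Γ (A.imp B)) : Der (A :: Γ) B :=
  Der.mp (h.weaken (fun _ hX => List.mem_cons_of_mem _ hX)) Der.h0

theorem Der.ipc_of_all {Γ : List Fm} {A : Fm} (h : Der Γ A) (hΓ : ∀ X ∈ Γ, IPC X) :
    IPC A := by
  induction h with
  | hyp h => exact hΓ _ h
  | ax h => exact h
  | mp _ _ ih1 ih2 => exact IPC.mp ih1 ih2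

theorem ipc_iff_der {A : Fm} : IPC A ↔ Der [] A :=
  ⟨Der.ax, fun h => h.ipc_of_all (by simp)⟩

theorem Der.ipc_imp {A B : Fm} (h : Der [A] B) : IPC (A.imp B) := ipc_iff_der.2 h.ded

theorem Der.of_ipc_imp {A B : Fm} (h : IPC (A.imp B)) : Der [A] B := (Der.ax (Γ := []) h).unded

theorem Der.andI {Γ : List Fm} {A B : Fm} (h1 : Der Γ A) (h2 : Der Γ B) : Der Γ (A.and B) :=
  Der.mp (Der.mp (Der.ax (IPC.and_intro A B)) h1) h2

theorem Der.andE1 {Γ : List Fm} {A B : Fm} (h : Der Γ (A.and B)) : Der Γ A :=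
  Der.mp (Der.ax (IPC.and_left A B)) h

theorem Der.andE2 {Γ : List Fm} {A B : Fm} (h : Der Γ (A.and B)) : Der Γ B :=
  Der.mp (Der.ax (IPC.and_right A B)) h

theorem Der.orI1 {Γ : List Fm} {A : Fm} (B : Fm) (h : Der Γ A) : Der Γ (A.or B) :=
  Der.mp (Der.ax (IPC.or_inl A B)) h

theorem Der.orI2 {Γ : List Fm} {B : Fm} (A : Fm) (h : Der Γ B) : Der Γ (A.or B) :=
  Der.mp (Der.ax (IPC.or_inr A B)) h

theorem Der.orE {Γ : List Fm} {A B C : Fm} (h : Der Γ (A.or B))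
    (h1 : Der (A :: Γ) C) (h2 : Der (B :: Γ) C) : Der Γ C :=
  Der.mp (Der.mp (Der.mp (Der.ax (IPC.or_elim A B C)) h1.ded) h2.ded) h

theorem Der.exf {Γ : List Fm} (A : Fm) (h : Der Γ Fm.bot) : Der Γ A :=
  Der.mp (Der.ax (IPC.exfalso A)) h

theorem Der.top (Γ : List Fm) : Der Γ Fm.top := Der.ax (ipc_id _)

theorem ipc_iff_intro {A B : Fm} (h1 : Der [A] B) (h2 : Der [B] A) : IPC (A.iff B) :=
  IPC.mp (IPC.mp (IPC.and_intro _ _) h1.ipc_imp) h2.ipc_imp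

theorem ipc_iff_mp {A B : Fm} (h : IPC (A.iff B)) : IPC (A.imp B) :=
  IPC.mp (IPC.and_left _ _) h

theorem ipc_iff_mpr {A B : Fm} (h : IPC (A.iff B)) : IPC (B.imp A) :=
  IPC.mp (IPC.and_right _ _) h

theorem ipc_iff_refl (A : Fm) : IPC (A.iff A) :=
  ipc_iff_intro Der.h0 Der.h0

theorem ipc_iff_symm {A B : Fm} (h : IPC (A.iff B)) : IPC (B.iff A) :=
  IPC.mp (IPC.mp (IPC.and_intro _ _) (ipc_iff_mpr h)) (ipc_iff_mp h)

theorem ipc_iff_trans {A B C : Fm} (h1 : IPC (A.iff B)) (h2 : IPC (B.iff C)) : IPC (A.iff C) :=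
  ipc_iff_intro
    (Der.mp (Der.ax (ipc_iff_mp h2)) (Der.mp (Der.ax (ipc_iff_mp h1)) Der.h0))
    (Der.mp (Der.ax (ipc_iff_mpr h1)) (Der.mp (Der.ax (ipc_iff_mpr h2)) Der.h0))

theorem ipc_or_cong {A A' B B' : Fm} (h1 : IPC (A.iff A')) (h2 : IPC (B.iff B')) :
    IPC ((A.or B).iff (A'.or B')) := by
  apply ipc_iff_intro
  · exact Der.orE Der.h0
      (Der.orI1 _ (Der.mp (Der.ax (ipc_iff_mp h1)) Der.h0))
      (Der.orI2 _ (Der.mp (Der.ax (ipc_iff_mp h2)) Der.h0))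
  · exact Der.orE Der.h0
      (Der.orI1 _ (Der.mp (Der.ax (ipc_iff_mpr h1)) Der.h0))
      (Der.orI2 _ (Der.mp (Der.ax (ipc_iff_mpr h2)) Der.h0))

theorem der_bigAnd {Γ : List Fm} {l : List Fm} :
    Der Γ (bigAndL l) ↔ ∀ A ∈ l, Der Γ A := by
  induction l with
  | nil => simp [bigAndL]; exact Der.top Γ
  | cons X l ih =>
    constructor
    · intro h Y hY
      rcases List.mem_cons.1 hY with h' | h'
      · subst h'; exact h.andE1
      · exact (ih.1 h.andE2) _ h'
    · intro h
      exact Der.andI (h _ (by simp)) (ih.2 fun Y hY => h _ (List.mem_cons_of_mem _ hY))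

theorem ipc_bigOr_append (l1 l2 : List Fm) :
    IPC ((bigOrL (l1 ++ l2)).iff ((bigOrL l1).or (bigOrL l2))) := by
  induction l1 with
  | nil =>
    apply ipc_iff_intro
    · exact Der.orI2 _ Der.h0
    · exact Der.orE Der.h0 (Der.exf _ (Der.h0 (A := Fm.bot))) Der.h0
  | cons X l1 ih =>
    show IPC ((X.or (bigOrL (l1 ++ l2))).iff ((X.or (bigOrL l1)).or (bigOrL l2)))
    apply ipc_iff_intro
    · refine Der.orE Der.h0 (Der.orI1 _ (Der.orI1 _ Der.h0)) ?_
      refine Der.orE (Der.mp (Der.ax (ipc_iff_mp ih)) Der.h0) ?_ ?_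
      · exact Der.orI1 _ (Der.orI2 _ Der.h0)
      · exact Der.orI2 _ Der.h0
    · refine Der.orE Der.h0 ?_ ?_
      · refine Der.orE Der.h0 (Der.orI1 _ Der.h0) ?_
        exact Der.orI2 _ (Der.mp (Der.ax (ipc_iff_mpr ih)) (Der.orI1 _ Der.h0))
      · exact Der.orI2 _ (Der.mp (Der.ax (ipc_iff_mpr ih)) (Der.orI2 _ Der.h0))

theorem ipc_bigOrNE_eq (B : Fm) (l : List Fm) :
    IPC ((bigOrNE B l).iff (bigOrL (B :: l))) := by
  induction l generalizing B with
  | nil =>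
    apply ipc_iff_intro
    · exact Der.orI1 _ Der.h0
    · exact Der.orE (Der.h0 (A := B.or (bigOrL []))) (Der.hyp (by simp [bigOrNE]))
        (Der.exf _ Der.h0)
  | cons C l ih =>
    show IPC ((B.or (bigOrNE C l)).iff (B.or (bigOrL (C :: l))))
    exact ipc_or_cong (ipc_iff_refl B) (ih C)

/-! ### Boolean soundness -/

def evalB (v : ℕ → Bool) : Fm → Bool
  | Fm.bot => false
  | Fm.atom n => v n
  | Fm.and A B => evalB v A && evalB v B
  | Fm.or A B => evalB v A || evalB v B
  | Fm.imp A B => !evalB v A || evalB v B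

theorem ipc_sound_bool {A : Fm} (h : IPC A) (v : ℕ → Bool) : evalB v A = true := by
  induction h with
  | imp_k A B => simp [evalB]; cases evalB v A <;> cases evalB v B <;> simp
  | imp_s A B C =>
    simp [evalB]; cases evalB v A <;> cases evalB v B <;> cases evalB v C <;> simp
  | and_intro A B => simp [evalB]; cases evalB v A <;> cases evalB v B <;> simp
  | and_left A B => simp [evalB]; cases evalB v A <;> cases evalB v B <;> simp
  | and_right A B => simp [evalB]; cases evalB v A <;> cases evalB v B <;> simp
  | or_inl A B => simp [evalB]; cases evalB v A <;> cases evalB v B <;> simp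
  | or_inr A B => simp [evalB]; cases evalB v A <;> cases evalB v B <;> simp
  | or_elim A B C =>
    simp [evalB]; cases evalB v A <;> cases evalB v B <;> cases evalB v C <;> simp
  | exfalso A => simp [evalB]
  | mp h1 h2 ih1 ih2 =>
    simp only [evalB, Bool.or_eq_true, Bool.not_eq_true'] at ih1
    rcases ih1 with h | h
    · rw [ih2] at h; cases h
    · exact h

theorem evalB_bigAnd {v : ℕ → Bool} {l : List Fm} :
    evalB v (bigAndL l) = true ↔ ∀ A ∈ l, evalB v A = true := by
  induction l with
  | nil => simp [bigAndL, evalB, Fm.top]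
  | cons X l ih =>
    show (evalB v X && evalB v (bigAndL l)) = true ↔ _
    simp [ih]

/-- the canonical valuation for a list of atoms -/
def asVal (as : List ℕ) : ℕ → Bool := fun q => decide (q ∈ as)

theorem evalB_asVal_atoms (as : List ℕ) :
    evalB (asVal as) (bigAndL (as.map Fm.atom)) = true := by
  rw [evalB_bigAnd]
  intro A hA
  rcases List.mem_map.1 hA with ⟨a, ha, rfl⟩
  simp [evalB, asVal, ha]

theorem not_ipc_atoms_imp {as : List ℕ} {p : ℕ} (hp : p ∉ as) :
    ¬ IPC ((bigAndL (as.map Fm.atom)).imp (Fm.atom p)) := by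
  intro h
  have := ipc_sound_bool h (asVal as)
  simp [evalB, evalB_asVal_atoms as, asVal, hp] at this

theorem ipc_atoms_imp_of_mem {as : List ℕ} {p : ℕ} (hp : p ∈ as) :
    IPC ((bigAndL (as.map Fm.atom)).imp (Fm.atom p)) :=
  Der.ipc_imp (der_bigAnd.1 Der.h0 _ (List.mem_map.2 ⟨p, hp, rfl⟩))

/-! ### The Aczel/Kleene slash relative to a formula -/

def Slash (D : Fm) : Fm → Prop
  | Fm.bot => IPC (D.imp Fm.bot)
  | Fm.atom n => IPC (D.imp (Fm.atom n))
  | Fm.and A B => Slash D A ∧ Slash D B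
  | Fm.or A B => Slash D A ∨ Slash D B
  | Fm.imp A B => IPC (D.imp (A.imp B)) ∧ (Slash D A → Slash D B)

theorem slash_sound {D X : Fm} (h : Slash D X) : IPC (D.imp X) := by
  induction X with
  | bot => exact h
  | atom n => exact h
  | and A B ihA ihB =>
    exact Der.ipc_imp (Der.andI (Der.of_ipc_imp (ihA h.1)) (Der.of_ipc_imp (ihB h.2)))
  | or A B ihA ihB =>
    rcases h with h | h
    · exact Der.ipc_imp (Der.orI1 _ (Der.of_ipc_imp (ihA h)))
    · exact Der.ipc_imp (Der.orI2 _ (Der.of_ipc_imp (ihB h)))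
  | imp A B ihA ihB => exact h.1

theorem slash_of_bot {D : Fm} (hD : IPC (D.imp Fm.bot)) : ∀ X, Slash D X := by
  intro X
  induction X with
  | bot => exact hD
  | atom n => exact Der.ipc_imp (Der.exf _ (Der.of_ipc_imp hD))
  | and A B ihA ihB => exact ⟨ihA, ihB⟩
  | or A B ihA ihB => exact Or.inl ihA
  | imp A B ihA ihB =>
    exact ⟨Der.ipc_imp (Der.exf _ (Der.of_ipc_imp hD)), fun _ => ihB⟩

theorem slash_thm {D X : Fm} (h : IPC X) : Slash D X := by
  induction h with
  | imp_k A B =>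
    refine ⟨Der.ipc_imp (Der.ax (IPC.imp_k A B)), fun sA => ?_⟩
    refine ⟨?_, fun _ => sA⟩
    exact Der.ipc_imp (Der.mp (Der.ax (IPC.imp_k A B)) (Der.of_ipc_imp (slash_sound sA)))
  | imp_s A B C =>
    refine ⟨Der.ipc_imp (Der.ax (IPC.imp_s A B C)), fun s1 => ?_⟩
    refine ⟨?_, fun s2 => ?_⟩
    · exact Der.ipc_imp (Der.mp (Der.ax (IPC.imp_s A B C)) (Der.of_ipc_imp s1.1))
    · refine ⟨?_, fun sA => (s1.2 sA).2 (s2.2 sA)⟩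
      exact Der.ipc_imp (Der.mp (Der.mp (Der.ax (IPC.imp_s A B C))
        (Der.of_ipc_imp s1.1)) (Der.of_ipc_imp s2.1))
  | and_intro A B =>
    refine ⟨Der.ipc_imp (Der.ax (IPC.and_intro A B)), fun sA => ?_⟩
    refine ⟨?_, fun sB => ⟨sA, sB⟩⟩
    exact Der.ipc_imp (Der.mp (Der.ax (IPC.and_intro A B)) (Der.of_ipc_imp (slash_sound sA)))
  | and_left A B =>
    exact ⟨Der.ipc_imp (Der.ax (IPC.and_left A B)), fun s => s.1⟩
  | and_right A B =>
    exact ⟨Der.ipc_imp (Der.ax (IPC.and_right A B)), fun s => s.2⟩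
  | or_inl A B =>
    exact ⟨Der.ipc_imp (Der.ax (IPC.or_inl A B)), fun s => Or.inl s⟩
  | or_inr A B =>
    exact ⟨Der.ipc_imp (Der.ax (IPC.or_inr A B)), fun s => Or.inr s⟩
  | or_elim A B C =>
    refine ⟨Der.ipc_imp (Der.ax (IPC.or_elim A B C)), fun s1 => ?_⟩
    refine ⟨?_, fun s2 => ?_⟩
    · exact Der.ipc_imp (Der.mp (Der.ax (IPC.or_elim A B C)) (Der.of_ipc_imp s1.1))
    · refine ⟨?_, fun sAB => ?_⟩
      · exact Der.ipc_imp (Der.mp (Der.mp (Der.ax (IPC.or_elim A B C))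
          (Der.of_ipc_imp s1.1)) (Der.of_ipc_imp s2.1))
      · rcases sAB with sA | sB
        · exact s1.2 sA
        · exact s2.2 sB
  | exfalso A =>
    exact ⟨Der.ipc_imp (Der.ax (IPC.exfalso A)), fun sbot => slash_of_bot sbot A⟩
  | mp h1 h2 ih1 ih2 => exact ih1.2 ih2

theorem slash_bigAnd {D : Fm} {l : List Fm} (h : ∀ A ∈ l, Slash D A) :
    Slash D (bigAndL l) := by
  induction l with
  | nil =>
    exact ⟨Der.ipc_imp (Der.ax (ipc_id Fm.bot)), fun s => s⟩
  | cons X l ih =>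
    exact ⟨h _ (by simp), ih fun A hA => h _ (List.mem_cons_of_mem _ hA)⟩

theorem component_prime {Dfm : Fm} (h : IsComponentOver IPC Dfm) : IPCPrime Dfm := by
  rcases h with ⟨as, imps, rfl, hcond⟩
  set Dfm := (bigAndL (as.map Fm.atom)).and
      (bigAndL (imps.map fun p => (Fm.atom p.1).imp p.2)) with hD
  have hself : Slash Dfm Dfm := by
    constructor
    · apply slash_bigAnd
      intro A hA
      rcases List.mem_map.1 hA with ⟨a, ha, rfl⟩
      exact Der.ipc_imp (der_bigAnd.1 Der.h0.andE1 _ (List.mem_map.2 ⟨a, ha, rfl⟩))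
    · apply slash_bigAnd
      intro A hA
      rcases List.mem_map.1 hA with ⟨pE, hpE, rfl⟩
      refine ⟨Der.ipc_imp (der_bigAnd.1 Der.h0.andE2 _ (List.mem_map.2 ⟨pE, hpE, rfl⟩)),
        fun sp => ?_⟩
      exfalso
      have hDp : IPC (Dfm.imp (Fm.atom pE.1)) := sp
      -- classical contradiction: Dfm is true under asVal as, atom pE.1 is false
      have hval := ipc_sound_bool hDp (asVal as)
      have hnotmem : pE.1 ∉ as := by
        intro hmem
        exact hcond _ hpE (ipc_atoms_imp_of_mem hmem)
      have hDtrue : evalB (asVal as) Dfm = true := by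
        rw [hD]
        show (evalB _ _ && evalB _ _) = true
        rw [evalB_asVal_atoms as]
        simp only [Bool.true_and]
        rw [evalB_bigAnd]
        intro A hA
        rcases List.mem_map.1 hA with ⟨qE, hqE, rfl⟩
        have : qE.1 ∉ as := by
          intro hmem
          exact hcond _ hqE (ipc_atoms_imp_of_mem hmem)
        show (!(evalB _ _) || _) = true
        simp [evalB, asVal, this]
      rw [show evalB (asVal as) (Dfm.imp (Fm.atom pE.1))
        = (!(evalB (asVal as) Dfm) || evalB (asVal as) (Fm.atom pE.1)) from rfl,
        hDtrue] at hval
      simp [evalB, asVal, hnotmem] at hval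
  intro B C hBC
  have hs : Slash Dfm (Dfm.imp (B.or C)) := slash_thm hBC
  have : Slash Dfm (B.or C) := hs.2 hself
  rcases this with h | h
  · exact Or.inl (slash_sound h)
  · exact Or.inr (slash_sound h)


/-! ### Measures for termination -/

def fW : Fm → ℕ
  | Fm.bot => 1
  | Fm.atom _ => 1
  | Fm.and A B => 2 * fW A * fW B
  | Fm.or A B => fW A + fW B + 1
  | Fm.imp _ _ => 1

def mW : Fm → ℕ
  | Fm.bot => 1
  | Fm.atom _ => 1
  | Fm.and A B => mW A + mW B + 1
  | Fm.or A B => mW A + mW B + 1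
  | Fm.imp A B => fW A * (mW B + 1)

theorem fW_pos (A : Fm) : 1 ≤ fW A := by
  induction A with
  | bot => simp [fW]
  | atom n => simp [fW]
  | and A B ihA ihB => show 1 ≤ 2 * fW A * fW B; nlinarith
  | or A B ihA ihB => show 1 ≤ fW A + fW B + 1; omega
  | imp A B ihA ihB => simp [fW]

theorem mW_pos (A : Fm) : 1 ≤ mW A := by
  induction A with
  | bot => simp [mW]
  | atom n => simp [mW]
  | and A B ihA ihB => show 1 ≤ mW A + mW B + 1; omega
  | or A B ihA ihB => show 1 ≤ mW A + mW B + 1; omega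
  | imp A B ihA ihB => show 1 ≤ fW A * (mW B + 1); nlinarith [fW_pos A]

def mu2 (imps : List (ℕ × Fm)) (todo : List Fm) : ℕ :=
  (imps.map fun pE => mW pE.2).sum + (todo.map mW).sum

/-! ### The representation formula -/

def reprF (as : List ℕ) (imps : List (ℕ × Fm)) (todo : List Fm) : Fm :=
  (bigAndL (as.map Fm.atom)).and
    ((bigAndL (imps.map fun p => (Fm.atom p.1).imp p.2)).and (bigAndL todo))

theorem der_reprF_iff {Γ : List Fm} {as : List ℕ} {imps : List (ℕ × Fm)} {todo : List Fm} :
    Der Γ (reprF as imps todo) ↔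
      ((∀ a ∈ as, Der Γ (Fm.atom a)) ∧
       (∀ pE ∈ imps, Der Γ ((Fm.atom pE.1).imp pE.2)) ∧
       (∀ T ∈ todo, Der Γ T)) := by
  constructor
  · intro h
    refine ⟨fun a ha => ?_, fun pE hpE => ?_, fun T hT => ?_⟩
    · exact der_bigAnd.1 h.andE1 _ (List.mem_map.2 ⟨a, ha, rfl⟩)
    · exact der_bigAnd.1 h.andE2.andE1 _ (List.mem_map.2 ⟨pE, hpE, rfl⟩)
    · exact der_bigAnd.1 h.andE2.andE2 _ hT
  · rintro ⟨h1, h2, h3⟩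
    refine Der.andI (der_bigAnd.2 ?_) (Der.andI (der_bigAnd.2 ?_) (der_bigAnd.2 h3))
    · intro A hA; rcases List.mem_map.1 hA with ⟨a, ha, rfl⟩; exact h1 _ ha
    · intro A hA; rcases List.mem_map.1 hA with ⟨pE, hpE, rfl⟩; exact h2 _ hpE

theorem nnil_top : NNIL Fm.top := NNIL.imp NI.bot NNIL.bot

theorem nnil_bigAnd {l : List Fm} (h : ∀ A ∈ l, NNIL A) : NNIL (bigAndL l) := by
  induction l with
  | nil => exact nnil_top
  | cons X l ih =>
    exact NNIL.and (h _ (by simp)) (ih fun A hA => h _ (List.mem_cons_of_mem _ hA))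

/-! ### The core decomposition -/

theorem core_decomp (univ : Finset ℕ) :
    ∀ K : ℕ, ∀ N : ℕ, ∀ (as : List ℕ) (imps : List (ℕ × Fm)) (todo : List Fm),
      (univ \ as.toFinset).card < K → mu2 imps todo < N →
      (∀ a ∈ as, a ∈ univ) →
      (∀ pE ∈ imps, pE.1 ∈ univ ∧ pE.1 ∉ as ∧ NNIL pE.2 ∧ ∀ a ∈ pE.2.atoms, a ∈ univ) →
      (∀ T ∈ todo, NNIL T ∧ ∀ a ∈ T.atoms, a ∈ univ) →
      ∃ comps : List Fm,
        (∀ D ∈ comps, IsComponentOver IPC D ∧ NNIL D) ∧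
        IPC ((reprF as imps todo).iff (bigOrL comps)) := by
  intro K
  induction K using Nat.strong_induction_on with
  | _ K IHK =>
  intro N
  induction N using Nat.strong_induction_on with
  | _ N IHN =>
  intro as imps todo hK hN has himps htodo
  match todo with
  | [] =>
    refine ⟨[(bigAndL (as.map Fm.atom)).and
        (bigAndL (imps.map fun p => (Fm.atom p.1).imp p.2))], ?_, ?_⟩
    · intro D hD
      rcases List.mem_singleton.1 hD with rfl
      refine ⟨⟨as, imps, rfl, fun p hp => not_ipc_atoms_imp (himps p hp).2.1⟩, ?_⟩
      refine NNIL.and (nnil_bigAnd ?_) (nnil_bigAnd ?_)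
      · intro A hA; rcases List.mem_map.1 hA with ⟨a, _, rfl⟩; exact NNIL.atom a
      · intro A hA; rcases List.mem_map.1 hA with ⟨pE, hpE, rfl⟩
        exact NNIL.imp (NI.atom _) (himps _ hpE).2.2.1
    · apply ipc_iff_intro
      · exact Der.orI1 _ (Der.andI Der.h0.andE1 Der.h0.andE2.andE1)
      · refine Der.orE Der.h0 ?_ (Der.exf _ Der.h0)
        exact Der.andI Der.h0.andE1 (Der.andI Der.h0.andE2 (der_bigAnd.2 (by simp)))
  | T :: rest =>
    obtain ⟨hT, hTat⟩ := htodo T (by simp)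
    have hrest : ∀ T' ∈ rest, NNIL T' ∧ ∀ a ∈ T'.atoms, a ∈ univ :=
      fun T' hT' => htodo T' (List.mem_cons_of_mem _ hT')
    match T, hT, hTat with
    | Fm.bot, _, _ =>
      refine ⟨[], fun D hD => by simp at hD, ?_⟩
      apply ipc_iff_intro
      · exact Der.exf _ ((der_reprF_iff.1 Der.h0).2.2 Fm.bot (by simp))
      · exact Der.exf _ Der.h0
    | Fm.atom n, _, hTat =>
      by_cases hmem : n ∈ as
      · -- already have the atom: drop it
        obtain ⟨comps, hcomps, heq⟩ :=
          IHN (mu2 imps (Fm.atom n :: rest)) hN as imps rest hK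
            (by simp [mu2, mW]) has himps hrest
        refine ⟨comps, hcomps, ipc_iff_trans ?_ heq⟩
        apply ipc_iff_intro
        · obtain ⟨Pa, Pi, Pt⟩ := der_reprF_iff.1 Der.h0
          exact der_reprF_iff.2 ⟨Pa, Pi, fun T' hT' => Pt _ (List.mem_cons_of_mem _ hT')⟩
        · obtain ⟨Pa, Pi, Pt⟩ := der_reprF_iff.1 Der.h0
          refine der_reprF_iff.2 ⟨Pa, Pi, fun T' hT' => ?_⟩
          rcases List.mem_cons.1 hT' with rfl | hT'
          · exact Pa _ hmem
          · exact Pt _ hT'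
      · -- thaw: add n to as and release frozen implications
        have hnuniv : n ∈ univ := hTat n (by simp [Fm.atoms])
        set matched := imps.filter (fun pE => pE.1 = n) with hmdef
        set others := imps.filter (fun pE => ¬ pE.1 = n) with hodef
        have hmatched : ∀ pE ∈ matched, pE ∈ imps ∧ pE.1 = n := by
          intro pE hpE
          have := List.mem_filter.1 hpE
          simpa using this
        have hothers : ∀ pE ∈ others, pE ∈ imps ∧ pE.1 ≠ n := by
          intro pE hpE
          have := List.mem_filter.1 hpE
          simpa using this
        have hcard : (univ \ (n :: as).toFinset).card < (univ \ as.toFinset).card := by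
          apply Finset.card_lt_card
          rw [Finset.ssubset_iff_of_subset
            (Finset.sdiff_subset_sdiff (le_refl _)
              (by simp only [List.toFinset_cons]; exact Finset.subset_insert _ _))]
          refine ⟨n, Finset.mem_sdiff.2 ⟨hnuniv, by simpa using hmem⟩, ?_⟩
          simp [List.toFinset_cons]
        obtain ⟨comps, hcomps, heq⟩ :=
          IHK ((univ \ as.toFinset).card) hK
            (mu2 others (matched.map Prod.snd ++ rest) + 1)
            (n :: as) others (matched.map Prod.snd ++ rest)
            hcard (Nat.lt_succ_self _)
            (by
              intro a ha
              rcases List.mem_cons.1 ha with rfl | ha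
              · exact hnuniv
              · exact has _ ha)
            (by
              intro pE hpE
              obtain ⟨hpE', hne⟩ := hothers pE hpE
              obtain ⟨h1, h2, h3, h4⟩ := himps pE hpE'
              refine ⟨h1, ?_, h3, h4⟩
              intro hc
              rcases List.mem_cons.1 hc with h | h
              · exact hne h
              · exact h2 h)
            (by
              intro T' hT'
              rcases List.mem_append.1 hT' with h | h
              · rcases List.mem_map.1 h with ⟨pE, hpE, rfl⟩
                obtain ⟨hpE', _⟩ := hmatched pE hpE
                exact ⟨(himps pE hpE').2.2.1, (himps pE hpE').2.2.2⟩
              · exact hrest _ h)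
        refine ⟨comps, hcomps, ipc_iff_trans ?_ heq⟩
        apply ipc_iff_intro
        · obtain ⟨Pa, Pi, Pt⟩ := der_reprF_iff.1 Der.h0
          refine der_reprF_iff.2 ⟨?_, ?_, ?_⟩
          · intro a ha
            rcases List.mem_cons.1 ha with rfl | ha
            · exact Pt _ (by simp)
            · exact Pa _ ha
          · exact fun pE hpE => Pi _ (hothers pE hpE).1
          · intro T' hT'
            rcases List.mem_append.1 hT' with h | h
            · rcases List.mem_map.1 h with ⟨pE, hpE, rfl⟩
              obtain ⟨hpE', hn⟩ := hmatched pE hpE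
              have := Pi _ hpE'
              rw [hn] at this
              exact Der.mp this (Pt _ (by simp))
            · exact Pt _ (List.mem_cons_of_mem _ h)
        · obtain ⟨Pa, Pi, Pt⟩ := der_reprF_iff.1 Der.h0
          refine der_reprF_iff.2 ⟨?_, ?_, ?_⟩
          · exact fun a ha => Pa _ (List.mem_cons_of_mem _ ha)
          · intro pE hpE
            by_cases hc : pE.1 = n
            · have hm : pE ∈ matched := List.mem_filter.2 ⟨hpE, by simpa using hc⟩
              have hE : Der _ pE.2 :=
                Pt _ (List.mem_append.2 (Or.inl (List.mem_map.2 ⟨pE, hm, rfl⟩)))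
              exact Der.mp (Der.ax (IPC.imp_k pE.2 (Fm.atom pE.1))) hE
            · exact Pi _ (List.mem_filter.2 ⟨hpE, by simpa using hc⟩)
          · intro T' hT'
            rcases List.mem_cons.1 hT' with rfl | hT'
            · exact Pa _ (by simp)
            · exact Pt _ (List.mem_append.2 (Or.inr hT'))
    | Fm.and A B, hT, hTat =>
      have hA : NNIL A := by cases hT with | and h1 h2 => exact h1
      have hB : NNIL B := by cases hT with | and h1 h2 => exact h2
      obtain ⟨comps, hcomps, heq⟩ :=
        IHN (mu2 imps (Fm.and A B :: rest)) hN as imps (A :: B :: rest) hK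
          (by simp [mu2, mW]; omega)
          has himps
          (by
            intro T' hT'
            rcases List.mem_cons.1 hT' with rfl | hT'
            · exact ⟨hA, fun a ha => hTat a (by simp [Fm.atoms]; exact Or.inl ha)⟩
            rcases List.mem_cons.1 hT' with rfl | hT'
            · exact ⟨hB, fun a ha => hTat a (by simp [Fm.atoms]; exact Or.inr ha)⟩
            · exact hrest _ hT')
      refine ⟨comps, hcomps, ipc_iff_trans ?_ heq⟩
      apply ipc_iff_intro
      · obtain ⟨Pa, Pi, Pt⟩ := der_reprF_iff.1 Der.h0
        refine der_reprF_iff.2 ⟨Pa, Pi, ?_⟩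
        intro T' hT'
        rcases List.mem_cons.1 hT' with h | hT'
        · rw [h]; exact (Pt (A.and B) (List.mem_cons_self)).andE1
        rcases List.mem_cons.1 hT' with h | hT'
        · rw [h]; exact (Pt (A.and B) (List.mem_cons_self)).andE2
        · exact Pt _ (List.mem_cons_of_mem _ hT')
      · obtain ⟨Pa, Pi, Pt⟩ := der_reprF_iff.1 Der.h0
        refine der_reprF_iff.2 ⟨Pa, Pi, ?_⟩
        intro T' hT'
        rcases List.mem_cons.1 hT' with rfl | hT'
        · exact Der.andI (Pt _ (by simp)) (Pt _ (by simp))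
        · exact Pt _ (List.mem_cons_of_mem _ (List.mem_cons_of_mem _ hT'))
    | Fm.or A B, hT, hTat =>
      have hA : NNIL A := by cases hT with | or h1 h2 => exact h1
      have hB : NNIL B := by cases hT with | or h1 h2 => exact h2
      obtain ⟨c1, hc1, he1⟩ :=
        IHN (mu2 imps (Fm.or A B :: rest)) hN as imps (A :: rest) hK
          (by simp [mu2, mW])
          has himps
          (by
            intro T' hT'
            rcases List.mem_cons.1 hT' with rfl | hT'
            · exact ⟨hA, fun a ha => hTat a (by simp [Fm.atoms]; exact Or.inl ha)⟩
            · exact hrest _ hT')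
      obtain ⟨c2, hc2, he2⟩ :=
        IHN (mu2 imps (Fm.or A B :: rest)) hN as imps (B :: rest) hK
          (by simp [mu2, mW])
          has himps
          (by
            intro T' hT'
            rcases List.mem_cons.1 hT' with rfl | hT'
            · exact ⟨hB, fun a ha => hTat a (by simp [Fm.atoms]; exact Or.inr ha)⟩
            · exact hrest _ hT')
      refine ⟨c1 ++ c2, ?_, ?_⟩
      · intro D hD
        rcases List.mem_append.1 hD with h | h
        · exact hc1 _ h
        · exact hc2 _ h
      · refine ipc_iff_trans ?_ (ipc_iff_symm (ipc_bigOr_append c1 c2))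
        refine ipc_iff_trans ?_ (ipc_or_cong he1 he2)
        apply ipc_iff_intro
        · obtain ⟨Pa, Pi, Pt⟩ := der_reprF_iff.1 Der.h0
          refine Der.orE (Pt (A.or B) (List.mem_cons_self)) ?_ ?_
          · refine Der.orI1 _ ?_
            obtain ⟨Pa', Pi', Pt'⟩ := der_reprF_iff.1 (Der.h1 (B := A))
            refine der_reprF_iff.2 ⟨Pa', Pi', ?_⟩
            intro T' hT'
            rcases List.mem_cons.1 hT' with rfl | hT'
            · exact Der.h0
            · exact Pt' _ (List.mem_cons_of_mem _ hT')
          · refine Der.orI2 _ ?_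
            obtain ⟨Pa', Pi', Pt'⟩ := der_reprF_iff.1 (Der.h1 (B := B))
            refine der_reprF_iff.2 ⟨Pa', Pi', ?_⟩
            intro T' hT'
            rcases List.mem_cons.1 hT' with rfl | hT'
            · exact Der.h0
            · exact Pt' _ (List.mem_cons_of_mem _ hT')
        · refine Der.orE Der.h0 ?_ ?_
          · obtain ⟨Pa, Pi, Pt⟩ := der_reprF_iff.1 (Der.h0 (Γ := [_]))
            refine der_reprF_iff.2 ⟨Pa, Pi, ?_⟩
            intro T' hT'
            rcases List.mem_cons.1 hT' with rfl | hT'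
            · exact Der.orI1 _ (Pt _ (by simp))
            · exact Pt _ (List.mem_cons_of_mem _ hT')
          · obtain ⟨Pa, Pi, Pt⟩ := der_reprF_iff.1 (Der.h0 (Γ := [_]))
            refine der_reprF_iff.2 ⟨Pa, Pi, ?_⟩
            intro T' hT'
            rcases List.mem_cons.1 hT' with rfl | hT'
            · exact Der.orI2 _ (Pt _ (by simp))
            · exact Pt _ (List.mem_cons_of_mem _ hT')
    | Fm.imp C B, hT, hTat =>
      have hC : NI C := by cases hT with | imp h1 h2 => exact h1
      have hB : NNIL B := by cases hT with | imp h1 h2 => exact h2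
      have hBat : ∀ a ∈ B.atoms, a ∈ univ :=
        fun a ha => hTat a (by simp [Fm.atoms]; exact Or.inr ha)
      match C, hC with
      | Fm.bot, _ =>
        obtain ⟨comps, hcomps, heq⟩ :=
          IHN (mu2 imps (Fm.imp Fm.bot B :: rest)) hN as imps rest hK
            (by
              simp only [mu2, List.map_cons, List.sum_cons]
              have := mW_pos (Fm.imp Fm.bot B)
              omega)
            has himps hrest
        refine ⟨comps, hcomps, ipc_iff_trans ?_ heq⟩
        apply ipc_iff_intro
        · obtain ⟨Pa, Pi, Pt⟩ := der_reprF_iff.1 Der.h0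
          exact der_reprF_iff.2 ⟨Pa, Pi, fun T' hT' => Pt _ (List.mem_cons_of_mem _ hT')⟩
        · obtain ⟨Pa, Pi, Pt⟩ := der_reprF_iff.1 Der.h0
          refine der_reprF_iff.2 ⟨Pa, Pi, ?_⟩
          intro T' hT'
          rcases List.mem_cons.1 hT' with rfl | hT'
          · exact Der.ax (IPC.exfalso B)
          · exact Pt _ hT'
      | Fm.atom p, _ =>
        by_cases hmem : p ∈ as
        · -- antecedent is available: use modus ponens
          obtain ⟨comps, hcomps, heq⟩ :=
            IHN (mu2 imps (Fm.imp (Fm.atom p) B :: rest)) hN as imps (B :: rest) hK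
              (by
                have hkey : mW B < mW (Fm.imp (Fm.atom p) B) := by
                  simp only [mW, fW]; omega
                simp only [mu2, List.map_cons, List.sum_cons]
                omega)
              has himps
              (by
                intro T' hT'
                rcases List.mem_cons.1 hT' with rfl | hT'
                · exact ⟨hB, hBat⟩
                · exact hrest _ hT')
          refine ⟨comps, hcomps, ipc_iff_trans ?_ heq⟩
          apply ipc_iff_intro
          · obtain ⟨Pa, Pi, Pt⟩ := der_reprF_iff.1 Der.h0
            refine der_reprF_iff.2 ⟨Pa, Pi, ?_⟩
            intro T' hT'
            rcases List.mem_cons.1 hT' with rfl | hT'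
            · exact Der.mp (Pt _ (by simp)) (Pa _ hmem)
            · exact Pt _ (List.mem_cons_of_mem _ hT')
          · obtain ⟨Pa, Pi, Pt⟩ := der_reprF_iff.1 Der.h0
            refine der_reprF_iff.2 ⟨Pa, Pi, ?_⟩
            intro T' hT'
            rcases List.mem_cons.1 hT' with rfl | hT'
            · exact Der.mp (Der.ax (IPC.imp_k B (Fm.atom p))) (Pt _ (by simp))
            · exact Pt _ (List.mem_cons_of_mem _ hT')
        · -- freeze the implication
          have hpuniv : p ∈ univ := hTat p (by simp [Fm.atoms])
          obtain ⟨comps, hcomps, heq⟩ :=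
            IHN (mu2 imps (Fm.imp (Fm.atom p) B :: rest)) hN as ((p, B) :: imps) rest hK
              (by
                have hkey : mW B < mW (Fm.imp (Fm.atom p) B) := by
                  simp only [mW, fW]; omega
                simp only [mu2, List.map_cons, List.sum_cons]
                omega)
              has
              (by
                intro pE hpE
                rcases List.mem_cons.1 hpE with rfl | hpE
                · exact ⟨hpuniv, hmem, hB, hBat⟩
                · exact himps _ hpE)
              hrest
          refine ⟨comps, hcomps, ipc_iff_trans ?_ heq⟩
          apply ipc_iff_intro
          · obtain ⟨Pa, Pi, Pt⟩ := der_reprF_iff.1 Der.h0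
            refine der_reprF_iff.2 ⟨Pa, ?_, fun T' hT' => Pt _ (List.mem_cons_of_mem _ hT')⟩
            intro pE hpE
            rcases List.mem_cons.1 hpE with rfl | hpE
            · exact Pt _ (by simp)
            · exact Pi _ hpE
          · obtain ⟨Pa, Pi, Pt⟩ := der_reprF_iff.1 Der.h0
            refine der_reprF_iff.2 ⟨Pa, fun pE hpE => Pi _ (List.mem_cons_of_mem _ hpE), ?_⟩
            intro T' hT'
            rcases List.mem_cons.1 hT' with rfl | hT'
            · exact Pi (p, B) (List.mem_cons_self)
            · exact Pt _ hT'
      | Fm.and C1 C2, hC =>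
        have hC1 : NI C1 := by cases hC with | and h1 h2 => exact h1
        have hC2 : NI C2 := by cases hC with | and h1 h2 => exact h2
        obtain ⟨comps, hcomps, heq⟩ :=
          IHN (mu2 imps (Fm.imp (Fm.and C1 C2) B :: rest)) hN as imps
            (Fm.imp C1 (Fm.imp C2 B) :: rest) hK
            (by
              have hkey : mW (Fm.imp C1 (Fm.imp C2 B)) < mW (Fm.imp (Fm.and C1 C2) B) := by
                simp only [mW, fW]
                have h1 := fW_pos C1; have h2 := fW_pos C2; have h3 := mW_pos B
                have h4 : 1 * 2 ≤ fW C2 * (mW B + 1) := Nat.mul_le_mul h2 (by omega)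
                rw [one_mul] at h4
                have h5 : fW C2 * (mW B + 1) + 1 < 2 * (fW C2 * (mW B + 1)) := by omega
                have h6 := mul_lt_mul_of_pos_left h5 (show (0:ℕ) < fW C1 by omega)
                have h7 : fW C1 * (2 * (fW C2 * (mW B + 1)))
                    = 2 * fW C1 * fW C2 * (mW B + 1) := by ring
                linarith
              simp only [mu2, List.map_cons, List.sum_cons]
              omega)
            has himps
            (by
              intro T' hT'
              rcases List.mem_cons.1 hT' with rfl | hT'
              · refine ⟨NNIL.imp hC1 (NNIL.imp hC2 hB), ?_⟩
                intro a ha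
                apply hTat a
                simp [Fm.atoms] at ha ⊢
                tauto
              · exact hrest _ hT')
        refine ⟨comps, hcomps, ipc_iff_trans ?_ heq⟩
        apply ipc_iff_intro
        · obtain ⟨Pa, Pi, Pt⟩ := der_reprF_iff.1 Der.h0
          refine der_reprF_iff.2 ⟨Pa, Pi, ?_⟩
          intro T' hT'
          rcases List.mem_cons.1 hT' with rfl | hT'
          · have d := Pt _ (List.mem_cons_self)
            have : Der (C2 :: C1 :: [reprF as imps (Fm.imp (Fm.and C1 C2) B :: rest)]) B :=
              Der.mp (d.weaken (by intro X hX; simp at hX ⊢; tauto))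
                (Der.andI Der.h1 Der.h0)
            exact this.ded.ded
          · exact Pt _ (List.mem_cons_of_mem _ hT')
        · obtain ⟨Pa, Pi, Pt⟩ := der_reprF_iff.1 Der.h0
          refine der_reprF_iff.2 ⟨Pa, Pi, ?_⟩
          intro T' hT'
          rcases List.mem_cons.1 hT' with rfl | hT'
          · have d := Pt _ (List.mem_cons_self)
            have : Der (Fm.and C1 C2 :: [reprF as imps (Fm.imp C1 (Fm.imp C2 B) :: rest)]) B :=
              Der.mp (Der.mp (d.weaken (by intro X hX; simp at hX ⊢; tauto))
                Der.h0.andE1) Der.h0.andE2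
            exact this.ded
          · exact Pt _ (List.mem_cons_of_mem _ hT')
      | Fm.or C1 C2, hC =>
        have hC1 : NI C1 := by cases hC with | or h1 h2 => exact h1
        have hC2 : NI C2 := by cases hC with | or h1 h2 => exact h2
        obtain ⟨comps, hcomps, heq⟩ :=
          IHN (mu2 imps (Fm.imp (Fm.or C1 C2) B :: rest)) hN as imps
            (Fm.imp C1 B :: Fm.imp C2 B :: rest) hK
            (by
              have hkey : mW (Fm.imp C1 B) + mW (Fm.imp C2 B)
                  < mW (Fm.imp (Fm.or C1 C2) B) := by
                simp only [mW, fW]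
                have h3 := mW_pos B
                have h7 : (fW C1 + fW C2 + 1) * (mW B + 1)
                    = fW C1 * (mW B + 1) + fW C2 * (mW B + 1) + (mW B + 1) := by ring
                linarith
              simp only [mu2, List.map_cons, List.sum_cons]
              omega)
            has himps
            (by
              intro T' hT'
              rcases List.mem_cons.1 hT' with rfl | hT'
              · refine ⟨NNIL.imp hC1 hB, ?_⟩
                intro a ha
                apply hTat a
                simp [Fm.atoms] at ha ⊢
                tauto
              rcases List.mem_cons.1 hT' with rfl | hT'
              · refine ⟨NNIL.imp hC2 hB, ?_⟩
                intro a ha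
                apply hTat a
                simp [Fm.atoms] at ha ⊢
                tauto
              · exact hrest _ hT')
        refine ⟨comps, hcomps, ipc_iff_trans ?_ heq⟩
        apply ipc_iff_intro
        · obtain ⟨Pa, Pi, Pt⟩ := der_reprF_iff.1 Der.h0
          refine der_reprF_iff.2 ⟨Pa, Pi, ?_⟩
          intro T' hT'
          have d := Pt _ (List.mem_cons_self)
          rcases List.mem_cons.1 hT' with rfl | hT'
          · exact (Der.mp (d.weaken (by intro X hX; simp at hX ⊢; tauto))
              (Der.orI1 _ Der.h0)).ded
          rcases List.mem_cons.1 hT' with rfl | hT'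
          · exact (Der.mp (d.weaken (by intro X hX; simp at hX ⊢; tauto))
              (Der.orI2 _ Der.h0)).ded
          · exact Pt _ (List.mem_cons_of_mem _ hT')
        · obtain ⟨Pa, Pi, Pt⟩ := der_reprF_iff.1 Der.h0
          refine der_reprF_iff.2 ⟨Pa, Pi, ?_⟩
          intro T' hT'
          rcases List.mem_cons.1 hT' with rfl | hT'
          · have d1 := Pt _ (List.mem_cons_self)
            have d2 := Pt _ (List.mem_cons_of_mem _ (List.mem_cons_self))
            refine Der.ded ?_
            refine Der.orE Der.h0 ?_ ?_
            · exact Der.mp (d1.weaken (by intro X hX; simp at hX ⊢; tauto)) Der.h0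
            · exact Der.mp (d2.weaken (by intro X hX; simp at hX ⊢; tauto)) Der.h0
          · exact Pt _ (List.mem_cons_of_mem _ (List.mem_cons_of_mem _ hT'))


end Aux

theorem stmt_16 :
    (∀ A : Fm, NNIL A → ∃ (B : Fm) (l : List Fm),
      (∀ C ∈ B :: l, NNIL C ∧ IPCPrime C) ∧ IPC (A.iff (bigOrNE B l))) ∧
    (∀ (B : Fm) (l : List Fm), (∀ C ∈ B :: l, NNIL C) →
      NNIL (bigOrNE B l)) := by
  constructor
  · intro A hA
    obtain ⟨comps, hcomps, heq⟩ :=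
      core_decomp A.atoms ((A.atoms \ ([] : List ℕ).toFinset).card + 1) (mu2 [] [A] + 1)
        [] [] [A] (Nat.lt_succ_self _) (Nat.lt_succ_self _)
        (by simp) (by simp)
        (by
          intro T hT
          rcases List.mem_singleton.1 hT with rfl
          exact ⟨hA, fun a ha => ha⟩)
    have hAr : IPC (A.iff (reprF [] [] [A])) := by
      apply ipc_iff_intro
      · refine der_reprF_iff.2 ⟨by simp, by simp, ?_⟩
        intro T hT
        rcases List.mem_singleton.1 hT with rfl
        exact Der.h0
      · exact (der_reprF_iff.1 Der.h0).2.2 A (by simp)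
    have htot : IPC (A.iff (bigOrL comps)) := ipc_iff_trans hAr heq
    match comps, hcomps, htot with
    | [], _, htot =>
      refine ⟨Fm.bot, [], ?_, htot⟩
      intro C hC
      rcases List.mem_singleton.1 hC with rfl
      exact ⟨NNIL.bot, fun B C _ => Or.inl (IPC.exfalso B)⟩
    | D :: ds, hcomps, htot =>
      refine ⟨D, ds, ?_, ipc_iff_trans htot (ipc_iff_symm (ipc_bigOrNE_eq D ds))⟩
      intro C hC
      obtain ⟨hcomp, hnnil⟩ := hcomps C hC
      exact ⟨hnnil, component_prime hcomp⟩
  · intro B l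
    induction l generalizing B with
    | nil => intro h; exact h B (by simp)
    | cons C l ih =>
      intro h
      show NNIL (B.or (bigOrNE C l))
      exact NNIL.or (h B (by simp))
        (ih C (fun X hX => h X (List.mem_cons_of_mem _ hX)))
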